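/- Let G be an r-regular finite simple graph on n vertices with r odd, n ≡ 0 (mod 4), and at least one edge. Then every edge-friendly labeling f of G satisfies (r+1)·|v_f(0) − v_f(1)| ≤ (r−1)·n; in particular, every element k of EBI(G) satisfies (r+1)·k ≤ (r−1)·n. -/

import Mathlib

open SimpleGraph

/-- The number of edges labeled `i` by the edge labeling `f`. -/
noncomputable def edgeCount {V : Type*} (G : SimpleGraph V) (f : G.edgeSet → ZMod 2) (i : ZMod 2) : ℕ :=
  Nat.card {e : G.edgeSet // f e = i}

/-- The number of edges incident to `v` that are labeled `i` (the `i`-degree of `v`). -/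
noncomputable def labDeg {V : Type*} (G : SimpleGraph V) (f : G.edgeSet → ZMod 2) (i : ZMod 2) (v : V) : ℕ :=
  Nat.card {e : G.edgeSet // f e = i ∧ v ∈ (e : Sym2 V)}

/-- The number of vertices whose induced (partial) label is `i`: those incident to strictly
more `i`-edges than `(1-i)`-edges. -/
noncomputable def vertexCount {V : Type*} (G : SimpleGraph V) (f : G.edgeSet → ZMod 2) (i : ZMod 2) : ℕ :=
  Nat.card {v : V // labDeg G f (1 - i) v < labDeg G f i v}

/-- An edge labeling (a surjective function onto `ZMod 2`) is edge-friendly if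
`|e_f(0) - e_f(1)| ≤ 1`. -/
def EdgeFriendly {V : Type*} (G : SimpleGraph V) (f : G.edgeSet → ZMod 2) : Prop :=
  Function.Surjective f ∧ |(edgeCount G f 0 : ℤ) - (edgeCount G f 1 : ℤ)| ≤ 1

/-- A graph is strongly edge-balanced if some edge-friendly labeling `f` satisfies
`v_f(0) = v_f(1)` and `e_f(0) = e_f(1)`. -/
def StronglyEdgeBalanced {V : Type*} (G : SimpleGraph V) : Prop :=
  ∃ f : G.edgeSet → ZMod 2, EdgeFriendly G f ∧
    vertexCount G f 0 = vertexCount G f 1 ∧ edgeCount G f 0 = edgeCount G f 1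

/-- `|v_f(0) - v_f(1)|` for an edge labeling `f`. -/
noncomputable def ebIndex {V : Type*} (G : SimpleGraph V) (f : G.edgeSet → ZMod 2) : ℕ :=
  ((vertexCount G f 0 : ℤ) - (vertexCount G f 1 : ℤ)).natAbs

/-- The edge-balanced index set of `G`. -/
def EBI {V : Type*} (G : SimpleGraph V) : Set ℕ :=
  {k | ∃ f : G.edgeSet → ZMod 2, EdgeFriendly G f ∧ ebIndex G f = k}

set_option linter.unusedSectionVars false

section Aux

variable {V : Type*} [Fintype V] [DecidableEq V] (G : SimpleGraph V) [DecidableRel G.Adj]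


lemma aux_labDeg_card (f : G.edgeSet → ZMod 2) (i : ZMod 2) (v : V) :
    labDeg G f i v
      = (Finset.univ.filter (fun e : G.edgeSet => f e = i ∧ v ∈ (e : Sym2 V))).card := by
  rw [labDeg, Nat.card_eq_fintype_card, Fintype.card_subtype]

lemma aux_handshake (f : G.edgeSet → ZMod 2) (i : ZMod 2) :
    ∑ v : V, labDeg G f i v = 2 * Nat.card {e : G.edgeSet // f e = i} := by
  have hcard : ∀ e : G.edgeSet, (Finset.univ.filter (fun v : V => v ∈ (e : Sym2 V))).card = 2 := by
    rintro ⟨e, he⟩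
    induction e using Sym2.ind with
    | _ a b =>
      have hab : a ≠ b := (G.mem_edgeSet.mp he).ne
      have h : Finset.univ.filter (fun v : V => v ∈ (s(a,b) : Sym2 V)) = {a, b} := by
        ext x; simp [Sym2.mem_iff]
      rw [h]
      simp [hab]
  calc ∑ v : V, labDeg G f i v
      = ∑ v : V, ∑ e : G.edgeSet, (if f e = i ∧ v ∈ (e : Sym2 V) then 1 else 0) := by
        refine Finset.sum_congr rfl fun v _ => ?_
        rw [aux_labDeg_card, Finset.card_filter]
    _ = ∑ e : G.edgeSet, ∑ v : V, (if f e = i ∧ v ∈ (e : Sym2 V) then 1 else 0) :=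
        Finset.sum_comm
    _ = ∑ e : G.edgeSet, (if f e = i then 2 else 0) := by
        refine Finset.sum_congr rfl fun e _ => ?_
        by_cases hf : f e = i
        · simp only [hf, true_and, if_true]
          rw [← hcard e, Finset.card_filter]
        · simp [hf]
    _ = 2 * Nat.card {e : G.edgeSet // f e = i} := by
        rw [Nat.card_eq_fintype_card, Fintype.card_subtype, Finset.card_filter, Finset.mul_sum]
        refine Finset.sum_congr rfl fun e _ => ?_
        by_cases hf : f e = i <;> simp [hf]

lemma aux_labDeg_add (f : G.edgeSet → ZMod 2) (v : V) :
    labDeg G f 0 v + labDeg G f 1 v = G.degree v := by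
  have hdeg : Nat.card {e : G.edgeSet // v ∈ (e : Sym2 V)} = G.degree v := by
    have e1 : {e : G.edgeSet // v ∈ (e : Sym2 V)} ≃ G.incidenceSet v :=
      { toFun := fun e => ⟨e.1.1, e.1.2, e.2⟩
        invFun := fun e => ⟨⟨e.1, e.2.1⟩, e.2.2⟩
        left_inv := fun e => rfl
        right_inv := fun e => rfl }
    rw [Nat.card_congr e1, Nat.card_eq_fintype_card, card_incidenceSet_eq_degree]
  rw [← hdeg, aux_labDeg_card, aux_labDeg_card, Nat.card_eq_fintype_card, Fintype.card_subtype,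
    Finset.card_filter, Finset.card_filter, Finset.card_filter, ← Finset.sum_add_distrib]
  refine Finset.sum_congr rfl fun e _ => ?_
  have h01 : f e = 0 ∨ f e = 1 := by
    generalize f e = y; revert y; decide
  rcases h01 with h | h <;> by_cases hm : v ∈ (e : Sym2 V) <;> simp [h, hm]

lemma aux_edge_partition (f : G.edgeSet → ZMod 2) :
    Nat.card {e : G.edgeSet // f e = 0} + Nat.card {e : G.edgeSet // f e = 1}
      = Fintype.card G.edgeSet := by
  rw [Nat.card_eq_fintype_card, Nat.card_eq_fintype_card, Fintype.card_subtype,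
    Fintype.card_subtype, Finset.card_filter, Finset.card_filter, ← Finset.sum_add_distrib,
    ← Finset.card_univ, Finset.card_eq_sum_ones]
  refine Finset.sum_congr rfl fun e _ => ?_
  have h01 : f e = 0 ∨ f e = 1 := by
    generalize f e = y; revert y; decide
  rcases h01 with h | h <;> simp [h]

end Aux

theorem maxEBI_regular_zero_mod_four {V : Type*} [Fintype V]
    (G : SimpleGraph V) [DecidableRel G.Adj] {r : ℕ}
    (hreg : G.IsRegularOfDegree r) (hr : Odd r)
    (hn : Fintype.card V % 4 = 0) (he : G.edgeSet.Nonempty) :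
    (∀ f : G.edgeSet → ZMod 2, EdgeFriendly G f →
      ((r : ℤ) + 1) * |(vertexCount G f 0 : ℤ) - (vertexCount G f 1 : ℤ)| ≤
        ((r : ℤ) - 1) * (Fintype.card V)) ∧
    ∀ k ∈ EBI G, ((r : ℤ) + 1) * (k : ℤ) ≤ ((r : ℤ) - 1) * (Fintype.card V) := by
  classical
  set n := Fintype.card V with hnn
  have key : ∀ f : G.edgeSet → ZMod 2, EdgeFriendly G f →
      ((r : ℤ) + 1) * |(vertexCount G f 0 : ℤ) - (vertexCount G f 1 : ℤ)| ≤
        ((r : ℤ) - 1) * n := by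
    intro f hf
    have hdeg : ∀ v : V, labDeg G f 0 v + labDeg G f 1 v = r := fun v => by
      rw [aux_labDeg_add, hreg v]
    -- total degree count
    have htot : 2 * (edgeCount G f 0 + edgeCount G f 1) = r * n := by
      have h1 : ∑ v : V, (labDeg G f 0 v + labDeg G f 1 v) = r * n := by
        simp only [hdeg]
        rw [Finset.sum_const, smul_eq_mul, Finset.card_univ, Nat.mul_comm]
      rw [Finset.sum_add_distrib, aux_handshake, aux_handshake] at h1
      rw [edgeCount, edgeCount]
      omega
    -- equality of edge counts
    have heq : edgeCount G f 0 = edgeCount G f 1 := by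
      obtain ⟨k, hk⟩ : ∃ k, n = 4 * k := ⟨n / 4, by omega⟩
      have h4 : 2 * (edgeCount G f 0 + edgeCount G f 1) = 4 * (r * k) := by
        rw [htot, hk]; ring
      have h2 := hf.2
      rw [abs_le] at h2
      obtain ⟨h2a, h2b⟩ := h2
      omega
    -- each i-sum is r*n via heq
    have hE : ∀ i : ZMod 2, 2 * (2 * edgeCount G f i) = r * n := by
      intro i
      have h01 : i = 0 ∨ i = 1 := by revert i; decide
      rcases h01 with h | h <;> rw [h] <;> omega
    -- key per-label bound
    have hbound : ∀ i j : ZMod 2, (∀ v, labDeg G f i v + labDeg G f j v = r) →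
        (r + 1) * Nat.card {v : V // labDeg G f j v < labDeg G f i v} ≤ r * n := by
      intro i j hij
      have hEi : 2 * ∑ v : V, labDeg G f i v = r * n := by
        rw [aux_handshake]; exact hE i
      rw [Nat.card_eq_fintype_card, Fintype.card_subtype]
      obtain ⟨m, hm⟩ := hr
      calc (r + 1) * (Finset.univ.filter fun v => labDeg G f j v < labDeg G f i v).card
          = ∑ _v ∈ Finset.univ.filter (fun v => labDeg G f j v < labDeg G f i v), (r + 1) := by
            rw [Finset.sum_const, smul_eq_mul, mul_comm]
        _ ≤ ∑ v ∈ Finset.univ.filter (fun v => labDeg G f j v < labDeg G f i v),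
              2 * labDeg G f i v := by
            refine Finset.sum_le_sum fun v hv => ?_
            rw [Finset.mem_filter] at hv
            have := hij v
            omega
        _ ≤ ∑ v : V, 2 * labDeg G f i v :=
            Finset.sum_le_sum_of_subset (Finset.filter_subset _ _)
        _ = r * n := by rw [← Finset.mul_sum]; exact hEi
    -- vertex partition
    have hvc : vertexCount G f 0 + vertexCount G f 1 = n := by
      have h10 : (1 - 0 : ZMod 2) = 1 := by decide
      have h11 : (1 - 1 : ZMod 2) = 0 := by decide
      rw [vertexCount, vertexCount, h10, h11, Nat.card_eq_fintype_card,
        Nat.card_eq_fintype_card, Fintype.card_subtype, Fintype.card_subtype,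
        Finset.card_filter, Finset.card_filter, ← Finset.sum_add_distrib, hnn,
        ← Finset.card_univ, Finset.card_eq_sum_ones]
      refine Finset.sum_congr rfl fun v _ => ?_
      have hd := hdeg v
      obtain ⟨m, hm⟩ := hr
      by_cases h : labDeg G f 1 v < labDeg G f 0 v
      · rw [if_pos h, if_neg (by omega : ¬ labDeg G f 0 v < labDeg G f 1 v)]
      · rw [if_neg h, if_pos (by omega : labDeg G f 0 v < labDeg G f 1 v)]
    have hb0 : (r + 1) * vertexCount G f 0 ≤ r * n := by
      have h10 : (1 - 0 : ZMod 2) = 1 := by decide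
      have := hbound 0 1 hdeg
      rw [vertexCount, h10]; exact this
    have hb1 : (r + 1) * vertexCount G f 1 ≤ r * n := by
      have h11 : (1 - 1 : ZMod 2) = 0 := by decide
      have := hbound 1 0 (fun v => by rw [Nat.add_comm]; exact hdeg v)
      rw [vertexCount, h11]; exact this
    -- conclude over ℤ
    have hvcZ : (vertexCount G f 0 : ℤ) + (vertexCount G f 1 : ℤ) = n := by
      exact_mod_cast hvc
    have hb0Z : ((r : ℤ) + 1) * (vertexCount G f 0 : ℤ) ≤ (r : ℤ) * n := by
      exact_mod_cast hb0
    have hb1Z : ((r : ℤ) + 1) * (vertexCount G f 1 : ℤ) ≤ (r : ℤ) * n := by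
      exact_mod_cast hb1
    rcases abs_cases ((vertexCount G f 0 : ℤ) - (vertexCount G f 1 : ℤ)) with ⟨h, _⟩ | ⟨h, _⟩ <;>
      rw [h] <;> nlinarith [hvcZ, hb0Z, hb1Z]
  refine ⟨key, ?_⟩
  rintro k ⟨f, hf, hk⟩
  have := key f hf
  rw [← hk, ebIndex]
  rwa [Int.natCast_natAbs]
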